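/- Let A and S be finite sets (task vehicles and servers), let q : S → ℕ be server capacities, let each a ∈ A have a strict preference given by a linear order ≻_a on S, and let each s ∈ S have a strict preference given by a linear order ≻_s on A. Then there exists a matching μ : A → Option S with |μ⁻¹(some s)| ≤ q(s) for every s ∈ S that admits no blocking pair, where a pair (a, s) ∈ A × S blocks μ if (i) a is unmatched under μ or strictly prefers s to its assigned server μ(a), and (ii) either |μ⁻¹(some s)| < q(s) or there exists a' with μ(a') = some s and a ≻_s a'. -/

import Mathlib

/-- In a finite nonempty set, a strict-total-order-like relation has a top
element (every other element is related to it). -/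
theorem sm_exists_best {α : Type*} (r : α → α → Prop)
    (htri : ∀ x y, r x y ∨ x = y ∨ r y x)
    (htrans : ∀ x y z, r x y → r y z → r x z) :
    ∀ T : Finset α, T.Nonempty → ∃ m ∈ T, ∀ x ∈ T, x ≠ m → r x m := by
  classical
  intro T
  induction T using Finset.induction_on with
  | empty => intro h; exact absurd h (by simp)
  | @insert b T hb ih =>
    intro _
    rcases T.eq_empty_or_nonempty with hT | hT
    · subst hT
      exact ⟨b, by simp, by simp⟩
    · obtain ⟨m, hm, hmax⟩ := ih hT
      rcases htri b m with h | h | h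
      · refine ⟨m, by simp [hm], ?_⟩
        intro x hx hxm
        rcases Finset.mem_insert.mp hx with rfl | hx
        · exact h
        · exact hmax x hx hxm
      · subst h; exact absurd hm hb
      · refine ⟨b, by simp, ?_⟩
        intro x hx hxb
        rcases Finset.mem_insert.mp hx with rfl | hx
        · exact absurd rfl hxb
        · by_cases hxm : x = m
          · subst hxm; exact h
          · exact htrans x m b (hmax x hx hxm) h

section StableAux

variable {A S : Type*} [Fintype A] [Fintype S] [DecidableEq A] [DecidableEq S]

/-- Number of agents currently assigned to server `s`. -/
def sm_cap (μ : A → Option S) (s : S) : ℕ :=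
  (Finset.univ.filter (fun a => μ a = some s)).card

/-- Invariants of the deferred-acceptance algorithm. `R a` is the set of
servers that have not (yet) rejected `a`. -/
def SMInv (q : S → ℕ) (prefA : A → S → S → Prop) (prefS : S → A → A → Prop)
    (μ : A → Option S) (R : A → Finset S) : Prop :=
  (∀ s, sm_cap μ s ≤ q s) ∧
  (∀ a s, s ∉ R a → sm_cap μ s = q s ∧ ∀ a', μ a' = some s → prefS s a' a) ∧
  (∀ a s s', μ a = some s' → prefA a s s' → s ∉ R a)

/-- Termination measure. -/
def sm_measure (μ : A → Option S) (R : A → Finset S) : ℕ :=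
  (∑ a, (R a).card) * (Fintype.card A + 1) +
    (Finset.univ.filter (fun a => μ a = none)).card

omit [Fintype S] [DecidableEq A] in
theorem sm_measure_lt (μ μ' : A → Option S) (R R' : A → Finset S)
    (h : (∑ x, (R' x).card) < ∑ x, (R x).card) :
    sm_measure μ' R' < sm_measure μ R := by
  unfold sm_measure
  have h2 : (Finset.univ.filter (fun a => μ' a = none)).card ≤ Fintype.card A := by
    simpa using Finset.card_filter_le Finset.univ (fun a => μ' a = none)
  have h3 : ((∑ x, (R' x).card) + 1) * (Fintype.card A + 1) ≤
      (∑ x, (R x).card) * (Fintype.card A + 1) :=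
    Nat.mul_le_mul_right _ (Nat.succ_le_of_lt h)
  have hexp : ((∑ x, (R' x).card) + 1) * (Fintype.card A + 1) =
      (∑ x, (R' x).card) * (Fintype.card A + 1) + (Fintype.card A + 1) := by ring
  omega

theorem sm_step (q : S → ℕ) (prefA : A → S → S → Prop) (prefS : S → A → A → Prop)
    (hprefA : ∀ a, IsStrictTotalOrder S (prefA a))
    (hprefS : ∀ s, IsStrictTotalOrder A (prefS s))
    (μ : A → Option S) (R : A → Finset S)
    (hinv : SMInv q prefA prefS μ R)
    (a : A) (ha : μ a = none) (hRa : (R a).Nonempty) :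
    ∃ μ' R', SMInv q prefA prefS μ' R' ∧ sm_measure μ' R' < sm_measure μ R := by
  classical
  obtain ⟨hinv1, hinv3, hinv4⟩ := hinv
  haveI hA := hprefA a
  -- the best remaining server for a
  obtain ⟨s, hsR, hsmax⟩ := sm_exists_best (fun x y => prefA a y x)
    (fun x y => by
      rcases trichotomous_of (prefA a) y x with h | h | h
      exacts [Or.inl h, Or.inr (Or.inl h.symm), Or.inr (Or.inr h)])
    (fun x y z h1 h2 => trans_of (prefA a) h2 h1) (R a) hRa
  haveI hS := hprefS s
  -- a proposes to s
  by_cases hcap : sm_cap μ s < q s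
  · -- Case 1: s has room, accept a.
    have hcap1 : sm_cap (Function.update μ a (some s)) s = sm_cap μ s + 1 := by
      have hset : Finset.univ.filter (fun x => Function.update μ a (some s) x = some s)
          = insert a (Finset.univ.filter (fun x => μ x = some s)) := by
        ext x
        by_cases hx : x = a <;> simp [Function.update_apply, hx, ha]
      have hnm : a ∉ Finset.univ.filter (fun x => μ x = some s) := by simp [ha]
      unfold sm_cap
      rw [hset, Finset.card_insert_of_notMem hnm]
    have hcap2 : ∀ t, t ≠ s → sm_cap (Function.update μ a (some s)) t = sm_cap μ t := by
      intro t ht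
      have hset : Finset.univ.filter (fun x => Function.update μ a (some s) x = some t)
          = Finset.univ.filter (fun x => μ x = some t) := by
        ext x
        by_cases hx : x = a <;> simp [Function.update_apply, hx, ha, Ne.symm ht]
      unfold sm_cap
      rw [hset]
    refine ⟨Function.update μ a (some s), R, ⟨?_, ?_, ?_⟩, ?_⟩
    · -- capacities
      intro s₀
      rcases eq_or_ne s₀ s with h | h
      · rw [h, hcap1]; omega
      · rw [hcap2 s₀ h]; exact hinv1 s₀
    · -- rejection invariant
      intro a₀ s₀ hnot
      obtain ⟨hc, hocc⟩ := hinv3 a₀ s₀ hnot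
      have hne : s₀ ≠ s := by rintro rfl; omega
      refine ⟨by rw [hcap2 s₀ hne]; exact hc, ?_⟩
      intro a' ha'
      by_cases hax : a' = a
      · rw [hax, Function.update_self] at ha'
        exact absurd (Option.some.inj ha') (Ne.symm hne)
      · rw [Function.update_of_ne hax] at ha'
        exact hocc a' ha'
    · -- matched-best invariant
      intro a₀ s₀ s' hμ hpref
      by_cases hax : a₀ = a
      · rw [hax, Function.update_self] at hμ
        have hss' : s' = s := (Option.some.inj hμ).symm
        rw [hax] at hpref
        rw [hss'] at hpref
        rw [hax]
        intro hmem
        have hne : s₀ ≠ s := fun h => by rw [h] at hpref; exact irrefl_of (prefA a) s hpref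
        exact irrefl_of (prefA a) s₀ (trans_of (prefA a) hpref (hsmax s₀ hmem hne))
      · rw [Function.update_of_ne hax] at hμ
        exact hinv4 a₀ s₀ s' hμ hpref
    · -- measure decreases
      unfold sm_measure
      have hset : Finset.univ.filter (fun x => Function.update μ a (some s) x = none)
          = (Finset.univ.filter (fun x => μ x = none)).erase a := by
        ext x
        by_cases hx : x = a <;> simp [Function.update_apply, hx, ha]
      have hmem : a ∈ Finset.univ.filter (fun x => μ x = none) := by simp [ha]
      have hpos : 0 < (Finset.univ.filter (fun x => μ x = none)).card :=
        Finset.card_pos.mpr ⟨a, hmem⟩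
      rw [hset, Finset.card_erase_of_mem hmem]
      omega
  · -- Case 2: s is full.
    have hceq : sm_cap μ s = q s := le_antisymm (hinv1 s) (le_of_not_gt hcap)
    by_cases hsw : ∃ w, μ w = some s ∧ (∀ x, μ x = some s → x ≠ w → prefS s x w)
        ∧ prefS s a w
    · -- Case 2a: a displaces the worst occupant w of s.
      obtain ⟨w, hwμ, hwmin, hws⟩ := hsw
      have hwa : w ≠ a := fun h => by rw [h, ha] at hwμ; exact nomatch hwμ
      have hsRw : s ∈ R w := by
        by_contra h
        exact irrefl_of (prefS s) w ((hinv3 w s h).2 w hwμ)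
      set μ' := Function.update (Function.update μ w none) a (some s) with hμ'def
      have hμ'a : μ' a = some s := by simp [hμ'def, Function.update_apply]
      have hμ'w : μ' w = none := by simp [hμ'def, Function.update_apply, hwa]
      have hμ'x : ∀ x, x ≠ a → x ≠ w → μ' x = μ x := by
        intro x h1 h2; simp [hμ'def, Function.update_apply, h1, h2]
      have hcap1 : sm_cap μ' s = sm_cap μ s := by
        have hset : Finset.univ.filter (fun x => μ' x = some s)
            = insert a ((Finset.univ.filter (fun x => μ x = some s)).erase w) := by
          ext x
          by_cases h1 : x = a
          · simp [h1, hμ'a]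
          · by_cases h2 : x = w
            · simp [h1, h2, hμ'w, hwa, Ne.symm hwa]
            · simp [h1, h2, hμ'x x h1 h2]
        have hna : a ∉ (Finset.univ.filter (fun x => μ x = some s)).erase w := by
          simp [ha]
        have hwmem : w ∈ Finset.univ.filter (fun x => μ x = some s) := by simp [hwμ]
        have hpos : 0 < (Finset.univ.filter (fun x => μ x = some s)).card :=
          Finset.card_pos.mpr ⟨w, hwmem⟩
        unfold sm_cap
        rw [hset, Finset.card_insert_of_notMem hna, Finset.card_erase_of_mem hwmem]
        omega
      have hcap2 : ∀ t, t ≠ s → sm_cap μ' t = sm_cap μ t := by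
        intro t ht
        have hset : Finset.univ.filter (fun x => μ' x = some t)
            = Finset.univ.filter (fun x => μ x = some t) := by
          ext x
          by_cases h1 : x = a
          · simp [h1, hμ'a, ha, Ne.symm ht]
          · by_cases h2 : x = w
            · simp [h1, h2, hμ'w, hwμ, Ne.symm ht]
            · simp [h1, h2, hμ'x x h1 h2]
        unfold sm_cap
        rw [hset]
      have hcapeq : ∀ t, sm_cap μ' t = sm_cap μ t := by
        intro t
        rcases eq_or_ne t s with h | h
        · rw [h, hcap1]
        · exact hcap2 t h
      refine ⟨μ', Function.update R w ((R w).erase s), ⟨?_, ?_, ?_⟩, ?_⟩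
      · -- capacities
        intro s₀
        rw [hcapeq s₀]; exact hinv1 s₀
      · -- rejection invariant
        intro a₀ s₀ hnot
        by_cases hold : s₀ ∈ R a₀
        · -- the new rejection: a₀ = w, s₀ = s
          have haw : a₀ = w := by
            by_contra h
            rw [Function.update_of_ne h] at hnot
            exact hnot hold
          rw [haw] at hnot hold ⊢
          rw [Function.update_self] at hnot
          have hs₀ : s₀ = s := by
            by_contra h
            exact hnot (Finset.mem_erase.mpr ⟨h, hold⟩)
          rw [hs₀]
          refine ⟨by rw [hcapeq]; exact hceq, ?_⟩
          intro a' ha'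
          by_cases h1 : a' = a
          · rw [h1]; exact hws
          · by_cases h2 : a' = w
            · rw [h2, hμ'w] at ha'; exact nomatch ha'
            · rw [hμ'x a' h1 h2] at ha'
              exact hwmin a' ha' h2
        · -- an old rejection
          obtain ⟨hc, hocc⟩ := hinv3 a₀ s₀ hold
          refine ⟨by rw [hcapeq]; exact hc, ?_⟩
          intro a' ha'
          by_cases h1 : a' = a
          · rw [h1, hμ'a] at ha'
            have hs₀ : s₀ = s := (Option.some.inj ha').symm
            rw [hs₀] at hocc ⊢
            rw [h1]
            exact trans_of (prefS s) hws (hocc w hwμ)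
          · by_cases h2 : a' = w
            · rw [h2, hμ'w] at ha'; exact nomatch ha'
            · rw [hμ'x a' h1 h2] at ha'
              exact hocc a' ha'
      · -- matched-best invariant
        intro a₀ s₀ s' hμ hpref
        by_cases h1 : a₀ = a
        · rw [h1, hμ'a] at hμ
          have hss' : s' = s := (Option.some.inj hμ).symm
          rw [h1] at hpref
          rw [hss'] at hpref
          rw [h1, Function.update_of_ne (Ne.symm hwa)]
          intro hmem
          have hne : s₀ ≠ s := fun h => by
            rw [h] at hpref; exact irrefl_of (prefA a) s hpref
          exact irrefl_of (prefA a) s₀ (trans_of (prefA a) hpref (hsmax s₀ hmem hne))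
        · by_cases h2 : a₀ = w
          · rw [h2, hμ'w] at hμ; exact nomatch hμ
          · rw [hμ'x a₀ h1 h2] at hμ
            have := hinv4 a₀ s₀ s' hμ hpref
            rw [Function.update_of_ne h2]
            exact this
      · -- measure decreases
        apply sm_measure_lt
        apply Finset.sum_lt_sum
        · intro i _
          by_cases h2 : i = w
          · rw [h2, Function.update_self]
            exact Finset.card_le_card (Finset.erase_subset _ _)
          · rw [Function.update_of_ne h2]
        · refine ⟨w, Finset.mem_univ w, ?_⟩
          rw [Function.update_self]
          exact Finset.card_erase_lt_of_mem hsRw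
    · -- Case 2b: s rejects a.
      have hall : ∀ x, μ x = some s → prefS s x a := by
        intro x hx
        have hO : (Finset.univ.filter (fun y => μ y = some s)).Nonempty :=
          ⟨x, by simp [hx]⟩
        obtain ⟨w, hwO, hwmin⟩ := sm_exists_best (prefS s)
          (fun x y => trichotomous_of (prefS s) x y)
          (fun x y z => trans_of (prefS s)) _ hO
        have hwμ : μ w = some s := (Finset.mem_filter.mp hwO).2
        have hwmin' : ∀ y, μ y = some s → y ≠ w → prefS s y w := by
          intro y hy hyw
          exact hwmin y (by simp [hy]) hyw
        have hnsw : ¬ prefS s a w := fun h => hsw ⟨w, hwμ, hwmin', h⟩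
        have hwa : w ≠ a := fun h => by rw [h, ha] at hwμ; exact nomatch hwμ
        have hwpref : prefS s w a := by
          rcases trichotomous_of (prefS s) a w with h | h | h
          · exact absurd h hnsw
          · exact absurd h.symm hwa
          · exact h
        by_cases hxw : x = w
        · rw [hxw]; exact hwpref
        · exact trans_of (prefS s) (hwmin' x hx hxw) hwpref
      refine ⟨μ, Function.update R a ((R a).erase s), ⟨hinv1, ?_, ?_⟩, ?_⟩
      · -- rejection invariant
        intro a₀ s₀ hnot
        by_cases hold : s₀ ∈ R a₀
        · have haa : a₀ = a := by
            by_contra h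
            rw [Function.update_of_ne h] at hnot
            exact hnot hold
          rw [haa] at hnot hold ⊢
          rw [Function.update_self] at hnot
          have hs₀ : s₀ = s := by
            by_contra h
            exact hnot (Finset.mem_erase.mpr ⟨h, hold⟩)
          rw [hs₀]
          exact ⟨hceq, hall⟩
        · exact hinv3 a₀ s₀ hold
      · -- matched-best invariant
        intro a₀ s₀ s' hμ hpref
        have hold := hinv4 a₀ s₀ s' hμ hpref
        by_cases h1 : a₀ = a
        · rw [h1, Function.update_self]
          rw [h1] at hold
          intro hmem
          exact hold (Finset.mem_of_mem_erase hmem)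
        · rw [Function.update_of_ne h1]
          exact hold
      · -- measure decreases
        apply sm_measure_lt
        apply Finset.sum_lt_sum
        · intro i _
          by_cases h2 : i = a
          · rw [h2, Function.update_self]
            exact Finset.card_le_card (Finset.erase_subset _ _)
          · rw [Function.update_of_ne h2]
        · refine ⟨a, Finset.mem_univ a, ?_⟩
          rw [Function.update_self]
          exact Finset.card_erase_lt_of_mem hsR

end StableAux

/-- Existence of a stable many-to-one matching of task vehicles
to capacitated servers under strict preferences on both sides: there is a
capacity-respecting matching admitting no blocking pair. -/
theorem stable_matching_exists (A S : Type*) [Fintype A] [Fintype S]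
    [DecidableEq A] [DecidableEq S]
    (q : S → ℕ)
    (prefA : A → S → S → Prop) (prefS : S → A → A → Prop)
    (hprefA : ∀ a, IsStrictTotalOrder S (prefA a))
    (hprefS : ∀ s, IsStrictTotalOrder A (prefS s)) :
    ∃ μ : A → Option S,
      (∀ s, (Finset.univ.filter (fun a => μ a = some s)).card ≤ q s) ∧
      ¬ ∃ (a : A) (s : S),
        (μ a = none ∨ ∃ s', μ a = some s' ∧ prefA a s s') ∧
        ((Finset.univ.filter (fun a' => μ a' = some s)).card < q s ∨
          ∃ a', μ a' = some s ∧ prefS s a a') := by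
  classical
  have key : ∀ n (μ : A → Option S) (R : A → Finset S),
      SMInv q prefA prefS μ R → sm_measure μ R ≤ n →
      ∃ μ : A → Option S,
        (∀ s, (Finset.univ.filter (fun a => μ a = some s)).card ≤ q s) ∧
        ¬ ∃ (a : A) (s : S),
          (μ a = none ∨ ∃ s', μ a = some s' ∧ prefA a s s') ∧
          ((Finset.univ.filter (fun a' => μ a' = some s)).card < q s ∨
            ∃ a', μ a' = some s ∧ prefS s a a') := by
    intro n
    induction n using Nat.strong_induction_on with
    | _ n ih =>
      intro μ R hinv hm
      by_cases hterm : ∃ a, μ a = none ∧ (R a).Nonempty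
      · obtain ⟨a, ha, hRa⟩ := hterm
        obtain ⟨μ', R', hinv', hlt⟩ :=
          sm_step q prefA prefS hprefA hprefS μ R hinv a ha hRa
        exact ih (sm_measure μ' R') (lt_of_lt_of_le hlt hm) μ' R' hinv' le_rfl
      · refine ⟨μ, hinv.1, ?_⟩
        rintro ⟨a, s, h1, h2⟩
        haveI := hprefS s
        have hnot : s ∉ R a := by
          rcases h1 with h1 | ⟨s', hs', hpref⟩
          · have hRe : R a = ∅ := by
              by_contra h
              exact hterm ⟨a, h1, Finset.nonempty_iff_ne_empty.mpr h⟩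
            simp [hRe]
          · exact hinv.2.2 a s s' hs' hpref
        obtain ⟨hc, hocc⟩ := hinv.2.1 a s hnot
        have hc' : (Finset.univ.filter (fun a' => μ a' = some s)).card = q s := hc
        rcases h2 with h2 | ⟨a', ha', hp⟩
        · omega
        · exact irrefl_of (prefS s) a (trans_of (prefS s) hp (hocc a' ha'))
  have inv0 : SMInv q prefA prefS (fun _ : A => (none : Option S))
      (fun _ : A => (Finset.univ : Finset S)) := by
    refine ⟨?_, ?_, ?_⟩
    · intro s; simp [sm_cap]
    · intro a s hs; simp at hs
    · intro a s s' h; simp at h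
  exact key _ _ _ inv0 le_rfl
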